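/- Every polyhedron P = { x ∈ ℝⁿ : Ax ≥ b } can be written as the Minkowski sum of the convex hull of a finite set of points and the conical hull of a finite set of vectors (Minkowski–Weyl theorem). -/

import Mathlib

open Matrix Pointwise Finset

open scoped Classical

variable {E : Type*} [AddCommGroup E] [Module ℝ E]




def coneOf (R : Finset E) : Set E :=
  {x : E | ∃ μ : E → ℝ, (∀ r, 0 ≤ μ r) ∧ x = ∑ r ∈ R, μ r • r}

lemma sum_mem_coneOf {ι : Type*} {R : Finset E} {s : Finset ι} {c : ι → ℝ} {f : ι → E}
    (hc : ∀ i ∈ s, 0 ≤ c i) (hf : ∀ i ∈ s, f i ∈ R) :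
    ∑ i ∈ s, c i • f i ∈ coneOf R := by
  refine ⟨fun r => ∑ i ∈ s.filter (fun i => f i = r), c i, fun r => ?_, ?_⟩
  · exact Finset.sum_nonneg fun i hi => hc i (Finset.mem_of_mem_filter _ hi)
  · rw [← Finset.sum_fiberwise_of_maps_to hf (fun i => c i • f i)]
    refine Finset.sum_congr rfl fun r _ => ?_
    rw [Finset.sum_smul]
    refine Finset.sum_congr rfl fun i hi => ?_
    rw [(Finset.mem_filter.mp hi).2]

lemma zero_mem_coneOf (R : Finset E) : (0 : E) ∈ coneOf R :=
  ⟨0, fun _ => le_refl 0, by simp⟩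

lemma add_mem_coneOf {R : Finset E} {x y : E} (hx : x ∈ coneOf R) (hy : y ∈ coneOf R) :
    x + y ∈ coneOf R := by
  obtain ⟨μ, hμ, hxe⟩ := hx
  obtain ⟨ν, hν, hye⟩ := hy
  exact ⟨μ + ν, fun r => add_nonneg (hμ r) (hν r), by
    simp [hxe, hye, add_smul, Finset.sum_add_distrib]⟩

lemma smul_mem_coneOf {R : Finset E} {c : ℝ} (hc : 0 ≤ c) {x : E} (hx : x ∈ coneOf R) :
    c • x ∈ coneOf R := by
  obtain ⟨μ, hμ, hxe⟩ := hx
  exact ⟨c • μ, fun r => mul_nonneg hc (hμ r), by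
    simp [hxe, Finset.smul_sum, smul_smul]⟩

lemma mem_coneOf_self {R : Finset E} {r : E} (hr : r ∈ R) : r ∈ coneOf R := by
  have := sum_mem_coneOf (s := ({r} : Finset E)) (c := fun _ => (1:ℝ)) (f := id)
    (fun i _ => zero_le_one) (fun i hi => by simpa using Finset.mem_singleton.mp hi ▸ hr)
  simpa using this

lemma coneOf_subset {R : Finset E} {S : Set E} (h0 : (0:E) ∈ S)
    (hadd : ∀ x ∈ S, ∀ y ∈ S, x + y ∈ S) (hsmul : ∀ (c : ℝ), 0 ≤ c → ∀ x ∈ S, c • x ∈ S)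
    (hR : ∀ r ∈ R, r ∈ S) : coneOf R ⊆ S := by
  rintro x ⟨μ, hμ, rfl⟩
  exact Finset.sum_induction _ (· ∈ S) (fun a b ha hb => hadd a ha b hb) h0
    (fun r hr => hsmul (μ r) (hμ r) r (hR r hr))


lemma trisplit (R : Finset E) (a : E →ₗ[ℝ] ℝ) {M : Type*} [AddCommMonoid M] (g : E → M) :
    ∑ r ∈ R, g r = ∑ r ∈ R.filter (fun r => 0 < a r), g r
      + ∑ r ∈ R.filter (fun r => a r = 0), g r
      + ∑ r ∈ R.filter (fun r => a r < 0), g r := by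
  have h1 : ∀ r ∈ R, ((¬ 0 < a r ∧ a r = 0) ↔ a r = 0) := by
    intro r _; constructor
    · exact fun h => h.2
    · intro h; exact ⟨by simp [h], h⟩
  have h2 : ∀ r ∈ R, ((¬ 0 < a r ∧ ¬ a r = 0) ↔ a r < 0) := by
    intro r _; constructor
    · rintro ⟨ha, hb⟩; rcases lt_trichotomy (a r) 0 with h | h | h
      · exact h
      · exact absurd h hb
      · exact absurd h ha
    · intro h; exact ⟨by linarith, by linarith⟩
  rw [← Finset.sum_filter_add_sum_filter_not R (fun r => 0 < a r) g,
    ← Finset.sum_filter_add_sum_filter_not (R.filter (fun r => ¬ 0 < a r)) (fun r => a r = 0) g,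
    Finset.filter_filter, Finset.filter_filter, Finset.filter_congr h1, Finset.filter_congr h2,
    add_assoc]

lemma coneOf_inter_halfspace (R : Finset E) (a : E →ₗ[ℝ] ℝ) :
    ∃ R' : Finset E, coneOf R ∩ {x : E | 0 ≤ a x} = coneOf R' := by
  set Rp := R.filter (fun r => 0 < a r) with hRp
  set Rz := R.filter (fun r => a r = 0) with hRz
  set Rn := R.filter (fun r => a r < 0) with hRn
  set w : E × E → E := fun pq => (a pq.1) • pq.2 + (-(a pq.2)) • pq.1 with hw
  refine ⟨R.filter (fun r => 0 ≤ a r) ∪ (Rp ×ˢ Rn).image w, ?_⟩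
  set R' := R.filter (fun r => 0 ≤ a r) ∪ (Rp ×ˢ Rn).image w with hR'
  have hgen : ∀ r ∈ R', r ∈ coneOf R ∩ {x : E | 0 ≤ a x} := by
    intro r hr
    rcases Finset.mem_union.mp hr with h | h
    · have h1 := Finset.mem_filter.mp h
      exact ⟨mem_coneOf_self h1.1, h1.2⟩
    · obtain ⟨⟨p, q⟩, hpq, rfl⟩ := Finset.mem_image.mp h
      obtain ⟨hp, hq⟩ := Finset.mem_product.mp hpq
      have hp' := Finset.mem_filter.mp hp
      have hq' := Finset.mem_filter.mp hq
      constructor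
      · exact add_mem_coneOf (smul_mem_coneOf hp'.2.le (mem_coneOf_self hq'.1))
          (smul_mem_coneOf (by linarith [hq'.2]) (mem_coneOf_self hp'.1))
      · show (0:ℝ) ≤ a _
        simp only [hw, map_add, _root_.map_smul, smul_eq_mul]
        ring_nf
        nlinarith [hp'.2, hq'.2]
  apply Set.Subset.antisymm
  · rintro x ⟨⟨μ, hμ, rfl⟩, hax⟩
    set x := ∑ r ∈ R, μ r • r with hx
    have hsplit := trisplit R a (fun r => μ r • r)
    rw [← hRp, ← hRz, ← hRn] at hsplit
    set P := ∑ p ∈ Rp, μ p * a p with hP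
    set N := ∑ q ∈ Rn, μ q * (-(a q)) with hN
    have hax2 : a x = P - N := by
      have : a x = ∑ r ∈ R, μ r * a r := by
        rw [hx, map_sum]; exact Finset.sum_congr rfl fun r _ => by rw [_root_.map_smul, smul_eq_mul]
      rw [this, trisplit R a (fun r => μ r * a r)]
      have hz : ∑ r ∈ Rz, μ r * a r = 0 :=
        Finset.sum_eq_zero fun r hr => by rw [(Finset.mem_filter.mp hr).2, mul_zero]
      have hn : ∑ r ∈ Rn, μ r * a r = -N := by
        rw [hN, ← Finset.sum_neg_distrib]
        exact Finset.sum_congr rfl fun r _ => by ring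
      rw [hz, hn]; ring
    have hNnn : 0 ≤ N := Finset.sum_nonneg fun q hq =>
      mul_nonneg (hμ q) (by linarith [(Finset.mem_filter.mp hq).2])
    have hNP : N ≤ P := by have := hax; simp only [Set.mem_setOf_eq] at hax; linarith
    have hRpR' : ∀ r ∈ Rp, r ∈ R' := fun r hr => Finset.mem_union_left _
      (Finset.mem_filter.mpr ⟨(Finset.mem_filter.mp hr).1, (Finset.mem_filter.mp hr).2.le⟩)
    have hRzR' : ∀ r ∈ Rz, r ∈ R' := fun r hr => Finset.mem_union_left _
      (Finset.mem_filter.mpr ⟨(Finset.mem_filter.mp hr).1, (Finset.mem_filter.mp hr).2.ge⟩)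
    rcases eq_or_lt_of_le hNnn with hN0 | hN0
    · -- N = 0 : all μ on Rn vanish
      have hμn : ∀ q ∈ Rn, μ q • q = 0 := by
        intro q hq
        have h0 : μ q * (-(a q)) = 0 := by
          have := (Finset.sum_eq_zero_iff_of_nonneg (fun q hq =>
            mul_nonneg (hμ q) (by linarith [(Finset.mem_filter.mp hq).2]))).mp hN0.symm
          exact this q hq
        have : μ q = 0 := by
          have haq := (Finset.mem_filter.mp hq).2
          rcases mul_eq_zero.mp h0 with h | h
          · exact h
          · linarith
        rw [this, zero_smul]
      rw [hx, hsplit, Finset.sum_eq_zero hμn, add_zero]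
      exact add_mem_coneOf
        (sum_mem_coneOf (fun r _ => hμ r) hRpR')
        (sum_mem_coneOf (fun r _ => hμ r) hRzR')
    · have hPpos : 0 < P := lt_of_lt_of_le hN0 hNP
      have claim : ∑ p ∈ Rp, ∑ q ∈ Rn, ((μ p * μ q)/P) • w (p, q)
          = ∑ q ∈ Rn, μ q • q + ∑ p ∈ Rp, ((μ p * N)/P) • p := by
        have hterm : ∀ p q : E, ((μ p * μ q)/P) • w (p, q)
            = ((μ p * a p) * (μ q / P)) • q + ((μ q * (-(a q))) * (μ p / P)) • p := by
          intro p q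
          rw [hw]; simp only
          rw [smul_add, smul_smul, smul_smul]
          module
        simp only [hterm, Finset.sum_add_distrib]
        congr 1
        · rw [Finset.sum_comm]
          refine Finset.sum_congr rfl fun q _ => ?_
          rw [← Finset.sum_smul, ← Finset.sum_mul, ← hP]
          congr 1
          field_simp
        · refine Finset.sum_congr rfl fun p _ => ?_
          rw [← Finset.sum_smul, ← Finset.sum_mul, ← hN]
          congr 1
          ring
      have hxeq : x = ∑ r ∈ Rz, μ r • r + ∑ p ∈ Rp, (μ p * (1 - N/P)) • p
          + ∑ z ∈ Rp ×ˢ Rn, ((μ z.1 * μ z.2)/P) • w z := by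
        have hsub : ∑ p ∈ Rp, (μ p * (1 - N/P)) • p
            = ∑ p ∈ Rp, μ p • p - ∑ p ∈ Rp, ((μ p * N)/P) • p := by
          rw [← Finset.sum_sub_distrib]
          refine Finset.sum_congr rfl fun p _ => ?_
          rw [← sub_smul]; congr 1; field_simp
        rw [hx, hsplit, Finset.sum_product, claim, hsub]
        abel
      rw [hxeq]
      refine add_mem_coneOf (add_mem_coneOf ?_ ?_) ?_
      · exact sum_mem_coneOf (fun r _ => hμ r) hRzR'
      · refine sum_mem_coneOf (fun p _ => ?_) hRpR'
        have : N / P ≤ 1 := (div_le_one hPpos).mpr hNP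
        exact mul_nonneg (hμ p) (by linarith)
      · refine sum_mem_coneOf (fun z hz => ?_) (fun z hz => ?_)
        · exact div_nonneg (mul_nonneg (hμ z.1) (hμ z.2)) hPpos.le
        · exact Finset.mem_union_right _ (Finset.mem_image_of_mem w hz)
  · exact coneOf_subset
      ⟨zero_mem_coneOf R, by simp⟩
      (fun x hx y hy => ⟨add_mem_coneOf hx.1 hy.1, by
        have : (0:ℝ) ≤ a x + a y := add_nonneg hx.2 hy.2
        simpa using this⟩)
      (fun c hc x hx => ⟨smul_mem_coneOf hc hx.1, by
        have : (0:ℝ) ≤ c * a x := mul_nonneg hc hx.2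
        simpa using this⟩)
      hgen

lemma univ_eq_coneOf (d : ℕ) :
    ∃ R : Finset (Fin d → ℝ), (Set.univ : Set (Fin d → ℝ)) = coneOf R := by
  set e : Fin d → (Fin d → ℝ) := fun i => fun j => if i = j then 1 else 0 with he
  refine ⟨(Finset.univ.image e) ∪ (Finset.univ.image fun i => -(e i)), ?_⟩
  refine Set.eq_of_subset_of_subset (fun x _ => ?_) (fun x _ => trivial)
  have hx : x = ∑ i : Fin d, (max (x i) 0) • e i + ∑ i : Fin d, (max (-(x i)) 0) • (-(e i)) := by
    have base := pi_eq_sum_univ x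
    rw [← Finset.sum_add_distrib]
    conv_lhs => rw [base]
    refine Finset.sum_congr rfl fun i _ => ?_
    simp only [he]
    rw [smul_neg, ← sub_eq_add_neg, ← sub_smul]
    congr 1
    rcases le_total 0 (x i) with h | h
    · rw [max_eq_left h, max_eq_right (by linarith)]; ring
    · rw [max_eq_right h, max_eq_left (by linarith)]; ring
  rw [hx]
  refine add_mem_coneOf ?_ ?_
  · exact sum_mem_coneOf (fun i _ => le_max_right _ _)
      (fun i _ => Finset.mem_union_left _ (Finset.mem_image_of_mem e (Finset.mem_univ i)))
  · exact sum_mem_coneOf (fun i _ => le_max_right _ _)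
      (fun i _ => Finset.mem_union_right _ (Finset.mem_image_of_mem _ (Finset.mem_univ i)))

lemma polyhedral_cone_fg (d : ℕ) : ∀ (k : ℕ) (a : Fin k → ((Fin d → ℝ) →ₗ[ℝ] ℝ)),
    ∃ R : Finset (Fin d → ℝ), {x : Fin d → ℝ | ∀ i, 0 ≤ a i x} = coneOf R := by
  intro k
  induction k with
  | zero =>
    intro a
    obtain ⟨R, hR⟩ := univ_eq_coneOf d
    exact ⟨R, by rw [← hR]; ext x; simp [Fin.elim0]⟩
  | succ k ih =>
    intro a
    obtain ⟨R, hR⟩ := ih (fun i => a i.castSucc)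
    obtain ⟨R', hR'⟩ := coneOf_inter_halfspace R (a (Fin.last k))
    refine ⟨R', ?_⟩
    rw [← hR', ← hR]
    ext x
    simp only [Set.mem_inter_iff, Set.mem_setOf_eq]
    constructor
    · intro h; exact ⟨fun i => h i.castSucc, h (Fin.last k)⟩
    · rintro ⟨h1, h2⟩ i
      refine Fin.lastCases ?_ ?_ i
      · exact h2
      · exact h1

/-- Minkowski–Weyl theorem: every polyhedron `{x : Ax ≥ b}` is the Minkowski
sum of the convex hull of a finite set of points and the conical hull of a
finite set of vectors. -/
theorem stmt_2 (m n : ℕ) (A : Matrix (Fin m) (Fin n) ℝ) (b : Fin m → ℝ) :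
    ∃ (V R : Finset (Fin n → ℝ)),
      {x : Fin n → ℝ | ∀ i, b i ≤ A.mulVec x i} =
        (convexHull ℝ (V : Set (Fin n → ℝ))) +
        {x : Fin n → ℝ | ∃ μ : (Fin n → ℝ) → ℝ,
          (∀ r, 0 ≤ μ r) ∧ x = ∑ r ∈ R, μ r • r} := by
  -- the homogenizing functionals
  set lst : Fin (n+1) := Fin.last n with hlst
  set row : Fin m → ((Fin (n+1) → ℝ) →ₗ[ℝ] ℝ) := fun i =>
    { toFun := fun y => (∑ j : Fin n, A i j * y j.castSucc) - b i * y lst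
      map_add' := by intro x y; simp only [Pi.add_apply, mul_add, Finset.sum_add_distrib]; ring
      map_smul' := by
        intro c x
        simp only [Pi.smul_apply, smul_eq_mul, RingHom.id_apply, Finset.mul_sum]
        rw [mul_sub, Finset.mul_sum]
        congr 1
        · exact Finset.sum_congr rfl fun j _ => by ring
        · ring } with hrow
  set lastL : (Fin (n+1) → ℝ) →ₗ[ℝ] ℝ := LinearMap.proj lst with hlastL
  set a : Fin (m+1) → ((Fin (n+1) → ℝ) →ₗ[ℝ] ℝ) := Fin.snoc row lastL with ha
  obtain ⟨Rhat, hC⟩ := polyhedral_cone_fg (n+1) (m+1) a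
  have hmemC : ∀ y : Fin (n+1) → ℝ, y ∈ coneOf Rhat ↔
      ((∀ i : Fin m, b i * y lst ≤ ∑ j : Fin n, A i j * y j.castSucc) ∧ 0 ≤ y lst) := by
    intro y
    rw [← hC]
    simp only [Set.mem_setOf_eq]
    constructor
    · intro h
      refine ⟨fun i => ?_, ?_⟩
      · have := h i.castSucc
        rw [ha] at this
        simp only [Fin.snoc_castSucc] at this
        rw [hrow] at this
        simp only [LinearMap.coe_mk, AddHom.coe_mk] at this
        linarith
      · have := h (Fin.last m)
        rw [ha] at this
        simp only [Fin.snoc_last] at this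
        exact this
    · rintro ⟨h1, h2⟩ i
      refine Fin.lastCases ?_ ?_ i
      · rw [ha]; simp only [Fin.snoc_last]; exact h2
      · intro i
        rw [ha]
        simp only [Fin.snoc_castSucc]
        rw [hrow]
        simp only [LinearMap.coe_mk, AddHom.coe_mk]
        have := h1 i
        linarith
  set proj : (Fin (n+1) → ℝ) → (Fin n → ℝ) := fun y j => y j.castSucc with hproj
  set Rpos := Rhat.filter (fun g => 0 < g lst) with hRpos
  set Rzero := Rhat.filter (fun g => ¬ 0 < g lst) with hRzero
  have hlast0 : ∀ g ∈ Rzero, g lst = 0 := by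
    intro g hg
    have hg' := Finset.mem_filter.mp hg
    have := ((hmemC g).mp (mem_coneOf_self hg'.1)).2
    have := hg'.2
    linarith
  refine ⟨Rpos.image (fun g => (g lst)⁻¹ • proj g), Rzero.image proj, ?_⟩
  set V := Rpos.image (fun g => (g lst)⁻¹ • proj g) with hV
  set RR := Rzero.image proj with hRR
  have hconeset : {x : Fin n → ℝ | ∃ μ : (Fin n → ℝ) → ℝ,
      (∀ r, 0 ≤ μ r) ∧ x = ∑ r ∈ RR, μ r • r} = coneOf RR := rfl
  rw [hconeset]
  have hmulVec : ∀ (x : Fin n → ℝ) (i : Fin m), A.mulVec x i = ∑ j : Fin n, A i j * x j := by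
    intro x i; simp [Matrix.mulVec, dotProduct]
  apply Set.Subset.antisymm
  · -- P ⊆ conv V + cone RR
    intro x hx
    simp only [Set.mem_setOf_eq] at hx
    have hy : (Fin.snoc x 1 : Fin (n+1) → ℝ) ∈ coneOf Rhat := by
      rw [hmemC]
      constructor
      · intro i
        simp only [Fin.snoc_castSucc, hlst, Fin.snoc_last]
        have := hx i
        rw [hmulVec] at this
        linarith
      · simp [hlst]
    obtain ⟨μ, hμ, hyeq⟩ := hy
    have hsplit : (Fin.snoc x 1 : Fin (n+1) → ℝ)
        = ∑ g ∈ Rpos, μ g • g + ∑ g ∈ Rzero, μ g • g := by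
      rw [hyeq, Finset.sum_filter_add_sum_filter_not Rhat (fun g => 0 < g lst)]
    have hone : (1:ℝ) = ∑ g ∈ Rpos, μ g * g lst := by
      have := congrFun hsplit lst
      simp only [Fin.snoc_last, hlst, Pi.add_apply, Finset.sum_apply, Pi.smul_apply,
        smul_eq_mul] at this
      rw [← hlst] at this
      have hz : ∑ g ∈ Rzero, μ g * g lst = 0 :=
        Finset.sum_eq_zero (fun g hg => by rw [hlast0 g hg, mul_zero])
      rw [hz, add_zero] at this
      exact this
    have hxeq : x = ∑ g ∈ Rpos, μ g • proj g + ∑ g ∈ Rzero, μ g • proj g := by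
      funext j
      have := congrFun hsplit j.castSucc
      simp only [Fin.snoc_castSucc, Pi.add_apply, Finset.sum_apply, Pi.smul_apply,
        smul_eq_mul] at this
      simpa [hproj] using this
    have hc : ∑ g ∈ Rpos, μ g • proj g ∈ convexHull ℝ (V : Set (Fin n → ℝ)) := by
      have hw : ∀ g ∈ Rpos, 0 ≤ μ g * g lst := fun g hg =>
        mul_nonneg (hμ g) (Finset.mem_filter.mp hg).2.le
      have hws : ∑ g ∈ Rpos, μ g * g lst = 1 := hone.symm
      have hz : ∀ g ∈ Rpos, (g lst)⁻¹ • proj g ∈ (V : Set (Fin n → ℝ)) := by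
        intro g hg
        exact Finset.mem_coe.mpr (Finset.mem_image_of_mem _ hg)
      have hcm := Finset.centerMass_mem_convexHull Rpos hw (by rw [hws]; norm_num) hz
      rw [Finset.centerMass_eq_of_sum_1 _ _ hws] at hcm
      convert hcm using 1
      refine Finset.sum_congr rfl fun g hg => ?_
      have hgl : g lst ≠ 0 := ne_of_gt (Finset.mem_filter.mp hg).2
      rw [smul_smul]
      congr 1
      field_simp
    have hs : ∑ g ∈ Rzero, μ g • proj g ∈ coneOf RR :=
      sum_mem_coneOf (fun g _ => hμ g) (fun g hg => Finset.mem_image_of_mem _ hg)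
    rw [hxeq]
    exact Set.add_mem_add hc hs
  · -- conv V + cone RR ⊆ P
    have hVP : (V : Set (Fin n → ℝ)) ⊆ {x : Fin n → ℝ | ∀ i, b i ≤ A.mulVec x i} := by
      intro v hv
      obtain ⟨g, hg, rfl⟩ := Finset.mem_image.mp (Finset.mem_coe.mp hv)
      have hgpos := (Finset.mem_filter.mp hg).2
      have hgC := (hmemC g).mp (mem_coneOf_self (Finset.mem_filter.mp hg).1)
      intro i
      rw [hmulVec]
      have h1 := hgC.1 i
      have : ∑ j : Fin n, A i j * ((g lst)⁻¹ • proj g) j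
          = (g lst)⁻¹ * ∑ j : Fin n, A i j * g j.castSucc := by
        rw [Finset.mul_sum]
        refine Finset.sum_congr rfl fun j _ => ?_
        simp only [Pi.smul_apply, smul_eq_mul, hproj]
        ring
      have hgl : g lst ≠ 0 := ne_of_gt hgpos
      rw [this, ← mul_le_mul_iff_right₀ hgpos, ← mul_assoc, mul_inv_cancel₀ hgl, one_mul]
      linarith
    have hPconv : Convex ℝ {x : Fin n → ℝ | ∀ i, b i ≤ A.mulVec x i} := by
      intro x hx y hy s t hs ht hst
      intro i
      have : A.mulVec (s • x + t • y) i = s * A.mulVec x i + t * A.mulVec y i := by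
        rw [Matrix.mulVec_add, Matrix.mulVec_smul, Matrix.mulVec_smul]
        simp
      rw [this]
      have h1 : s * b i ≤ s * A.mulVec x i := mul_le_mul_of_nonneg_left (hx i) hs
      have h2 : t * b i ≤ t * A.mulVec y i := mul_le_mul_of_nonneg_left (hy i) ht
      have h3 : s * b i + t * b i = b i := by rw [← add_mul, hst, one_mul]
      linarith
    have hRP : coneOf RR ⊆ {x : Fin n → ℝ | ∀ i, 0 ≤ A.mulVec x i} := by
      refine coneOf_subset ?_ ?_ ?_ ?_
      · intro i; simp [Matrix.mulVec_zero]
      · intro x hx y hy i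
        rw [Matrix.mulVec_add]
        exact add_nonneg (hx i) (hy i)
      · intro c hc x hx i
        rw [Matrix.mulVec_smul]
        simpa using mul_nonneg hc (hx i)
      · intro r hr
        obtain ⟨g, hg, rfl⟩ := Finset.mem_image.mp hr
        have hgC := (hmemC g).mp (mem_coneOf_self (Finset.mem_filter.mp hg).1)
        intro i
        rw [hmulVec]
        have := hgC.1 i
        rw [hlast0 g hg, mul_zero] at this
        exact this
    rintro z ⟨c, hc, s, hs, rfl⟩
    intro i
    rw [Matrix.mulVec_add]
    have h1 : b i ≤ A.mulVec c i := convexHull_min hVP hPconv hc i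
    have h2 : 0 ≤ A.mulVec s i := hRP hs i
    simpa using add_le_add h1 h2
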